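/- For every real number x, ∑_{k=0}^∞ a_k · x^k/k! = ∫₀^∞ g(x·t)³ · e^{−t} dt; in particular the series on the left converges and the integrand on the right is integrable on (0,∞). -/

import Mathlib

open MeasureTheory Real
open scoped ENNReal NNReal

/-- `a k` is the sum of squared multinomial coefficients over all triples
`(k₁,k₂,k₃)` of natural numbers with `k₁+k₂+k₃ = k`. -/
def a (k : ℕ) : ℕ :=
  ∑ p ∈ Finset.Nat.antidiagonalTuple 3 k, (Nat.multinomial Finset.univ p) ^ 2

/-- The entire function `g(y) = ∑ y^k/(k!)²`, so that `g(y) = I₀(2√y)` for `y ≥ 0`. -/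
noncomputable def g (y : ℝ) : ℝ := ∑' k : ℕ, y ^ k / ((Nat.factorial k : ℝ)) ^ 2

namespace EgfA

lemma gamma_int (n : ℕ) : IntegrableOn (fun t : ℝ => t ^ n * Real.exp (-t)) (Set.Ioi 0) volume := by
  have h := Real.GammaIntegral_convergent (s := n + 1) (by positivity)
  apply h.congr_fun ?_ measurableSet_Ioi
  intro t ht
  simp [Real.rpow_natCast, mul_comm]

lemma gamma_val (n : ℕ) : ∫ t in Set.Ioi (0:ℝ), t ^ n * Real.exp (-t) = n.factorial := by
  have h := Real.Gamma_eq_integral (s := n + 1) (by positivity)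
  rw [Real.Gamma_nat_eq_factorial] at h
  rw [h]
  apply setIntegral_congr_fun measurableSet_Ioi
  intro t ht
  simp [Real.rpow_natCast, mul_comm]

lemma fact_le_sq (n : ℕ) : (n.factorial : ℝ) ≤ (n.factorial : ℝ) ^ 2 := by
  have h1 : (1:ℝ) ≤ n.factorial := by exact_mod_cast n.factorial_pos
  nlinarith

lemma summable_norm_f (y : ℝ) : Summable fun n : ℕ => ‖y ^ n / ((Nat.factorial n : ℝ)) ^ 2‖ := by
  apply Summable.of_nonneg_of_le (fun n => norm_nonneg _) ?_ (Real.summable_pow_div_factorial |y|)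
  intro n
  rw [Real.norm_eq_abs, abs_div, abs_pow,
    abs_of_nonneg (by positivity : (0:ℝ) ≤ ((Nat.factorial n:ℝ))^2), ← abs_pow]
  apply div_le_div_of_nonneg_left (by positivity) (by exact_mod_cast n.factorial_pos) (fact_le_sq n)

lemma continuous_g : Continuous g := by
  rw [continuous_iff_continuousAt]
  intro y
  have hs : Metric.ball (0:ℝ) (|y|+1) ∈ nhds y := by
    apply Metric.isOpen_ball.mem_nhds
    simp only [Metric.mem_ball, Real.dist_eq, sub_zero]
    linarith
  apply ContinuousOn.continuousAt ?_ hs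
  rw [continuousOn_iff_continuous_restrict]
  apply continuous_tsum (u := fun n => (|y|+1) ^ n / ((Nat.factorial n : ℝ))^2)
  · intro k; fun_prop
  · apply Summable.of_nonneg_of_le (fun n => by positivity) ?_
      (Real.summable_pow_div_factorial (|y|+1))
    intro n
    apply div_le_div_of_nonneg_left (by positivity) (by exact_mod_cast n.factorial_pos)
      (fact_le_sq n)
  · rintro n ⟨z, hz⟩
    simp only [Metric.mem_ball, Real.dist_eq, sub_zero] at hz
    simp only [Real.norm_eq_abs, abs_div, abs_pow, Set.restrict_apply]
    rw [abs_of_nonneg (by positivity : (0:ℝ) ≤ (Nat.factorial n:ℝ))]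
    gcongr
    all_goals first
    | positivity
    | linarith [abs_nonneg y, hz.le]

set_option maxHeartbeats 2000000 in
lemma g_cube (y : ℝ) : g y ^ 3 = ∑' z : ℕ × ℕ × ℕ,
    y ^ z.1 / ((Nat.factorial z.1 : ℝ)) ^ 2 * (y ^ z.2.1 / ((Nat.factorial z.2.1 : ℝ)) ^ 2
      * (y ^ z.2.2 / ((Nat.factorial z.2.2 : ℝ)) ^ 2)) := by
  have hf := summable_norm_f y
  have h2 : g y * g y = ∑' w : ℕ × ℕ, y ^ w.1 / ((Nat.factorial w.1 : ℝ)) ^ 2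
      * (y ^ w.2 / ((Nat.factorial w.2 : ℝ)) ^ 2) := tsum_mul_tsum_of_summable_norm hf hf
  have e : g y ^ 3 = g y * (g y * g y) := by ring
  rw [e, h2]
  exact tsum_mul_tsum_of_summable_norm (g := fun w : ℕ × ℕ =>
      y ^ w.1 / ((Nat.factorial w.1 : ℝ)) ^ 2 * (y ^ w.2 / ((Nat.factorial w.2 : ℝ)) ^ 2))
      hf (hf.mul_norm hf)

lemma fact_bound (n1 n2 n3 : ℕ) :
    ((n1 + n2 + n3).factorial : ℝ) ≤ 4 ^ (n1 + n2 + n3) *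
      (n1.factorial * n2.factorial * n3.factorial) := by
  have hc : ∀ n k : ℕ, k ≤ n → n.choose k ≤ 2 ^ n := by
    intro n k hk
    calc n.choose k ≤ ∑ i ∈ Finset.range (n+1), n.choose i :=
          Finset.single_le_sum (fun i _ => Nat.zero_le _) (Finset.mem_range.2 (by omega))
      _ = 2 ^ n := Nat.sum_range_choose n
  have e1 : (n1 + (n2 + n3)).choose n1 * n1.factorial * (n2 + n3).factorial
      = (n1 + (n2+n3)).factorial := by
    have := Nat.choose_mul_factorial_mul_factorial (Nat.le_add_right n1 (n2+n3))
    simpa using this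
  have e2 : (n2 + n3).choose n2 * n2.factorial * n3.factorial = (n2 + n3).factorial := by
    have := Nat.choose_mul_factorial_mul_factorial (Nat.le_add_right n2 n3)
    simpa using this
  have key : (n1 + n2 + n3).factorial ≤ 4 ^ (n1 + n2 + n3) *
      (n1.factorial * n2.factorial * n3.factorial) := by
    have h1 := hc (n1 + (n2+n3)) n1 (Nat.le_add_right _ _)
    have h2 := hc (n2 + n3) n2 (Nat.le_add_right _ _)
    calc (n1 + n2 + n3).factorial = (n1 + (n2+n3)).factorial := by rw [Nat.add_assoc]
      _ = (n1 + (n2+n3)).choose n1 * n1.factorial *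
          ((n2+n3).choose n2 * n2.factorial * n3.factorial) := by rw [e2, e1]
      _ ≤ 2 ^ (n1+(n2+n3)) * n1.factorial * (2 ^ (n2+n3) * n2.factorial * n3.factorial) :=
          Nat.mul_le_mul (Nat.mul_le_mul_right _ h1)
            (Nat.mul_le_mul_right _ (Nat.mul_le_mul_right _ h2))
      _ ≤ 4 ^ (n1 + n2 + n3) * (n1.factorial * n2.factorial * n3.factorial) := by
          have h4 : 2 ^ (n1+(n2+n3)) * 2 ^ (n2+n3) ≤ 4 ^ (n1+n2+n3) := by
            calc 2 ^ (n1+(n2+n3)) * 2 ^ (n2+n3) ≤ 2 ^ (n1+n2+n3) * 2 ^ (n1+n2+n3) := by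
                  apply Nat.mul_le_mul <;> apply Nat.pow_le_pow_right <;> omega
              _ = 4 ^ (n1+n2+n3) := by rw [← Nat.mul_pow]
          calc 2 ^ (n1+(n2+n3)) * n1.factorial * (2 ^ (n2+n3) * n2.factorial * n3.factorial)
              = (2 ^ (n1+(n2+n3)) * 2 ^ (n2+n3)) *
                (n1.factorial * n2.factorial * n3.factorial) := by ring
            _ ≤ 4 ^ (n1+n2+n3) * (n1.factorial * n2.factorial * n3.factorial) :=
                Nat.mul_le_mul_right _ h4
  exact_mod_cast key

def e1 : (Fin 3 → ℕ) ≃ ℕ × ℕ × ℕ where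
  toFun p := (p 0, p 1, p 2)
  invFun q := ![q.1, q.2.1, q.2.2]
  left_inv p := by funext i; fin_cases i <;> simp
  right_inv q := by simp

set_option maxHeartbeats 2000000 in
lemma regroup {x : ℝ} {S : ℝ}
    (h : HasSum (fun z : ℕ × ℕ × ℕ => x ^ (z.1 + z.2.1 + z.2.2) *
      ((z.1 + z.2.1 + z.2.2).factorial : ℝ) /
      ((z.1.factorial : ℝ) * z.2.1.factorial * z.2.2.factorial) ^ 2) S) :
    HasSum (fun k : ℕ => (a k : ℝ) * x ^ k / (Nat.factorial k : ℝ)) S := by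
  set Z : ℕ × ℕ × ℕ → ℝ := fun z => x ^ (z.1 + z.2.1 + z.2.2) *
      ((z.1 + z.2.1 + z.2.2).factorial : ℝ) /
      ((z.1.factorial : ℝ) * z.2.1.factorial * z.2.2.factorial) ^ 2 with hZ
  have h' : HasSum (fun w : Σ n : ℕ, Finset.Nat.antidiagonalTuple 3 n =>
      Z (e1 ((Finset.Nat.sigmaAntidiagonalTupleEquivTuple 3) w))) S := by
    exact ((Equiv.hasSum_iff ((Finset.Nat.sigmaAntidiagonalTupleEquivTuple 3).trans e1))).2 h
  apply h'.sigma
  intro k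
  have fib : ∀ w : Finset.Nat.antidiagonalTuple 3 k,
      Z (e1 ((Finset.Nat.sigmaAntidiagonalTupleEquivTuple 3) ⟨k, w⟩)) =
      (Nat.multinomial Finset.univ (w : Fin 3 → ℕ) : ℝ) ^ 2 * x ^ k / (k.factorial : ℝ) := by
    rintro ⟨p, hp⟩
    have hsum : p 0 + p 1 + p 2 = k := by
      have := (Finset.Nat.mem_antidiagonalTuple).1 hp
      rw [← this, Fin.sum_univ_three]
    have hmul : ((p 0).factorial * (p 1).factorial * (p 2).factorial) *
        Nat.multinomial Finset.univ p = k.factorial := by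
      have := Nat.multinomial_spec (Finset.univ : Finset (Fin 3)) p
      rw [Fin.prod_univ_three] at this
      rw [this, Fin.sum_univ_three, hsum]
    simp only [Z, Finset.Nat.sigmaAntidiagonalTupleEquivTuple, Equiv.coe_fn_mk, e1]
    have hmulR : ((p 0).factorial : ℝ) * (p 1).factorial * (p 2).factorial *
        (Nat.multinomial Finset.univ p : ℝ) = (k.factorial : ℝ) := by exact_mod_cast hmul
    rw [hsum]
    have h0 : ((p 0).factorial : ℝ) ≠ 0 := by positivity
    have h1 : ((p 1).factorial : ℝ) ≠ 0 := by positivity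
    have h2 : ((p 2).factorial : ℝ) ≠ 0 := by positivity
    have hk : (k.factorial : ℝ) ≠ 0 := by positivity
    field_simp
    rw [← hmulR]; ring
  have := hasSum_fintype (fun w : Finset.Nat.antidiagonalTuple 3 k =>
      Z (e1 ((Finset.Nat.sigmaAntidiagonalTupleEquivTuple 3) ⟨k, w⟩)))
  convert this using 1
  rw [Finset.sum_congr rfl (fun w _ => fib w)]
  rw [Finset.sum_coe_sort (Finset.Nat.antidiagonalTuple 3 k)
    (fun p => (Nat.multinomial Finset.univ p : ℝ) ^ 2 * x ^ k / (k.factorial : ℝ))]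
  rw [a]
  push_cast
  rw [Finset.sum_mul, Finset.sum_div]

noncomputable def Phi (x : ℝ) (z : ℕ × ℕ × ℕ) (t : ℝ) : ℝ :=
  x ^ (z.1 + z.2.1 + z.2.2) / ((z.1.factorial : ℝ) * z.2.1.factorial * z.2.2.factorial) ^ 2
    * (t ^ (z.1 + z.2.1 + z.2.2) * Real.exp (-t))

set_option maxHeartbeats 2000000 in
lemma Phi_eq (x t : ℝ) (z : ℕ × ℕ × ℕ) :
    (x*t) ^ z.1 / ((z.1.factorial : ℝ)) ^ 2 * ((x*t) ^ z.2.1 / ((z.2.1.factorial : ℝ)) ^ 2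
      * ((x*t) ^ z.2.2 / ((z.2.2.factorial : ℝ)) ^ 2)) * Real.exp (-t) = Phi x z t := by
  have h0 : ((z.1.factorial : ℝ)) ≠ 0 := by positivity
  have h1 : ((z.2.1.factorial : ℝ)) ≠ 0 := by positivity
  have h2 : ((z.2.2.factorial : ℝ)) ≠ 0 := by positivity
  simp only [Phi]
  field_simp
  ring

set_option maxHeartbeats 2000000 in
lemma tsum_Phi (x t : ℝ) :
    g (x*t) ^ 3 * Real.exp (-t) = ∑' z : ℕ × ℕ × ℕ, Phi x z t := by
  rw [g_cube (x*t), ← tsum_mul_right]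
  exact tsum_congr fun z => Phi_eq x t z

set_option maxHeartbeats 2000000 in
lemma integrable_Phi (x : ℝ) (z : ℕ × ℕ × ℕ) :
    Integrable (Phi x z) (volume.restrict (Set.Ioi 0)) :=
  (gamma_int (z.1 + z.2.1 + z.2.2)).const_mul _

set_option maxHeartbeats 2000000 in
lemma integral_Phi (x : ℝ) (z : ℕ × ℕ × ℕ) :
    ∫ t in Set.Ioi (0:ℝ), Phi x z t = x ^ (z.1 + z.2.1 + z.2.2) *
      ((z.1 + z.2.1 + z.2.2).factorial : ℝ) /
      ((z.1.factorial : ℝ) * z.2.1.factorial * z.2.2.factorial) ^ 2 := by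
  simp only [Phi]
  rw [integral_const_mul, gamma_val]
  ring

set_option maxHeartbeats 2000000 in
lemma norm_integral_Phi (x : ℝ) (z : ℕ × ℕ × ℕ) :
    ∫ t in Set.Ioi (0:ℝ), ‖Phi x z t‖ = |x| ^ (z.1 + z.2.1 + z.2.2) *
      ((z.1 + z.2.1 + z.2.2).factorial : ℝ) /
      ((z.1.factorial : ℝ) * z.2.1.factorial * z.2.2.factorial) ^ 2 := by
  have : ∫ t in Set.Ioi (0:ℝ), ‖Phi x z t‖ = ∫ t in Set.Ioi (0:ℝ),
      |x| ^ (z.1 + z.2.1 + z.2.2) / ((z.1.factorial : ℝ) * z.2.1.factorial * z.2.2.factorial) ^ 2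
        * (t ^ (z.1 + z.2.1 + z.2.2) * Real.exp (-t)) := by
    apply setIntegral_congr_fun measurableSet_Ioi
    intro t ht
    have ht' : (0:ℝ) < t := ht
    simp only [Phi]
    rw [Real.norm_eq_abs, abs_mul, abs_div, abs_pow, abs_pow,
      abs_of_nonneg (by positivity : (0:ℝ) ≤ (z.1.factorial : ℝ) * z.2.1.factorial * z.2.2.factorial),
      abs_of_nonneg (by positivity : (0:ℝ) ≤ t ^ (z.1 + z.2.1 + z.2.2) * Real.exp (-t))]
  rw [this, integral_const_mul, gamma_val]
  ring

set_option maxHeartbeats 2000000 in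
lemma summable_norm_integral (x : ℝ) :
    Summable fun z : ℕ × ℕ × ℕ => ∫ t in Set.Ioi (0:ℝ), ‖Phi x z t‖ := by
  simp only [norm_integral_Phi]
  have hu : Summable (fun n : ℕ => (4*|x|) ^ n / n.factorial) :=
    Real.summable_pow_div_factorial _
  have hu0 : (0:ℕ → ℝ) ≤ fun n : ℕ => (4*|x|) ^ n / n.factorial := by
    intro n; positivity
  have husum : Summable fun z : ℕ × ℕ × ℕ =>
      (4*|x|) ^ z.1 / (z.1.factorial : ℝ) * ((4*|x|) ^ z.2.1 / (z.2.1.factorial : ℝ)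
        * ((4*|x|) ^ z.2.2 / (z.2.2.factorial : ℝ))) :=
    hu.mul_of_nonneg (hu.mul_of_nonneg hu hu0 hu0) hu0
      (fun z => mul_nonneg (hu0 z.1) (hu0 z.2))
  apply Summable.of_nonneg_of_le (fun z => by positivity) ?_ husum
  intro z
  obtain ⟨n1, n2, n3⟩ := z
  simp only
  have hb := fact_bound n1 n2 n3
  have hp : (0:ℝ) < (n1.factorial : ℝ) * n2.factorial * n3.factorial := by positivity
  calc |x| ^ (n1 + n2 + n3) * ((n1 + n2 + n3).factorial : ℝ) /
        ((n1.factorial : ℝ) * n2.factorial * n3.factorial) ^ 2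
      ≤ |x| ^ (n1 + n2 + n3) * (4 ^ (n1 + n2 + n3) *
          ((n1.factorial : ℝ) * n2.factorial * n3.factorial)) /
        ((n1.factorial : ℝ) * n2.factorial * n3.factorial) ^ 2 := by
        gcongr
    _ = (4*|x|) ^ n1 / (n1.factorial : ℝ) * ((4*|x|) ^ n2 / (n2.factorial : ℝ)
          * ((4*|x|) ^ n3 / (n3.factorial : ℝ))) := by
        have h1 : ((n1.factorial : ℝ)) ≠ 0 := by positivity
        have h2 : ((n2.factorial : ℝ)) ≠ 0 := by positivity
        have h3 : ((n3.factorial : ℝ)) ≠ 0 := by positivity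
        field_simp
        ring

set_option maxHeartbeats 2000000 in
lemma summable_norm_Phi (x t : ℝ) : Summable fun z : ℕ × ℕ × ℕ => ‖Phi x z t‖ := by
  have hf := summable_norm_f (x*t)
  have h3 : Summable fun z : ℕ × ℕ × ℕ =>
      ‖(x*t) ^ z.1 / ((z.1.factorial : ℝ)) ^ 2 * ((x*t) ^ z.2.1 / ((z.2.1.factorial : ℝ)) ^ 2
        * ((x*t) ^ z.2.2 / ((z.2.2.factorial : ℝ)) ^ 2))‖ := hf.mul_norm (hf.mul_norm hf)
  apply (h3.mul_right (Real.exp (-t))).congr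
  intro z
  rw [← Phi_eq x t z, norm_mul _ (Real.exp (-t)), Real.norm_eq_abs (Real.exp (-t)), Real.abs_exp]

end EgfA

open EgfA

set_option maxHeartbeats 2000000 in
/-- Exponential generating function of `a`: the series `∑ a_k x^k/k!` converges and
equals `∫₀^∞ I₀³(2√(xt)) e^{-t} dt`; in particular the integrand is integrable on `(0,∞)`. -/
theorem egf_a_eq_integral (x : ℝ) :
    IntegrableOn (fun t : ℝ => g (x * t) ^ 3 * Real.exp (-t)) (Set.Ioi 0) volume ∧
    HasSum (fun k : ℕ => (a k : ℝ) * x ^ k / (Nat.factorial k : ℝ))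
      (∫ t in Set.Ioi (0:ℝ), g (x * t) ^ 3 * Real.exp (-t)) := by
  have hInt : ∀ z : ℕ × ℕ × ℕ, Integrable (Phi x z) (volume.restrict (Set.Ioi 0)) :=
    integrable_Phi x
  have hSum : Summable fun z : ℕ × ℕ × ℕ =>
      ∫ t, ‖Phi x z t‖ ∂(volume.restrict (Set.Ioi 0)) := summable_norm_integral x
  have hcont : Continuous (fun t : ℝ => g (x * t) ^ 3 * Real.exp (-t)) :=
    ((continuous_g.comp (continuous_const.mul continuous_id)).pow 3).mul
      (Real.continuous_exp.comp continuous_neg)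
  have hIntegrable : IntegrableOn (fun t : ℝ => g (x * t) ^ 3 * Real.exp (-t))
      (Set.Ioi 0) volume := by
    refine ⟨hcont.aestronglyMeasurable, ?_⟩
    have key : ∀ t : ℝ, (‖g (x * t) ^ 3 * Real.exp (-t)‖₊ : ℝ≥0∞) ≤
        ∑' z : ℕ × ℕ × ℕ, (‖Phi x z t‖₊ : ℝ≥0∞) := by
      intro t
      have hs := summable_norm_Phi x t
      have hs' : Summable fun z : ℕ × ℕ × ℕ => ‖Phi x z t‖₊ := by
        rw [← NNReal.summable_coe]
        simpa only [coe_nnnorm] using hs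
      calc (‖g (x * t) ^ 3 * Real.exp (-t)‖₊ : ℝ≥0∞)
          = ‖∑' z : ℕ × ℕ × ℕ, Phi x z t‖₊ := by rw [tsum_Phi]
        _ ≤ ((∑' z : ℕ × ℕ × ℕ, ‖Phi x z t‖₊ : NNReal) : ℝ≥0∞) :=
            ENNReal.coe_le_coe.2 (nnnorm_tsum_le hs')
        _ = ∑' z : ℕ × ℕ × ℕ, (‖Phi x z t‖₊ : ℝ≥0∞) := ENNReal.coe_tsum hs'
    show (∫⁻ t, ‖g (x * t) ^ 3 * Real.exp (-t)‖₊ ∂(volume.restrict (Set.Ioi 0))) < ⊤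
    calc (∫⁻ t, ‖g (x * t) ^ 3 * Real.exp (-t)‖₊ ∂(volume.restrict (Set.Ioi 0)))
        ≤ ∫⁻ t, ∑' z : ℕ × ℕ × ℕ, (‖Phi x z t‖₊ : ℝ≥0∞) ∂(volume.restrict (Set.Ioi 0)) :=
          lintegral_mono fun t => key t
      _ = ∑' z : ℕ × ℕ × ℕ, ∫⁻ t, ‖Phi x z t‖₊ ∂(volume.restrict (Set.Ioi 0)) :=
          lintegral_tsum fun z => (hInt z).aestronglyMeasurable.enorm
      _ = ∑' z : ℕ × ℕ × ℕ, ENNReal.ofReal (∫ t, ‖Phi x z t‖ ∂(volume.restrict (Set.Ioi 0))) :=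
          tsum_congr fun z => (ofReal_integral_norm_eq_lintegral_enorm (hInt z)).symm
      _ = ENNReal.ofReal (∑' z : ℕ × ℕ × ℕ, ∫ t, ‖Phi x z t‖ ∂(volume.restrict (Set.Ioi 0))) :=
          (ENNReal.ofReal_tsum_of_nonneg
            (fun z => integral_nonneg fun t => norm_nonneg _) hSum).symm
      _ < ⊤ := ENNReal.ofReal_lt_top
  refine ⟨hIntegrable, ?_⟩
  have HS := MeasureTheory.hasSum_integral_of_summable_integral_norm hInt hSum
  have e1 : (∫ t, (∑' z : ℕ × ℕ × ℕ, Phi x z t) ∂(volume.restrict (Set.Ioi 0))) =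
      ∫ t in Set.Ioi (0:ℝ), g (x * t) ^ 3 * Real.exp (-t) :=
    integral_congr_ae (Filter.Eventually.of_forall fun t => (tsum_Phi x t).symm)
  rw [e1] at HS
  have e2 : (fun z : ℕ × ℕ × ℕ => ∫ t, Phi x z t ∂(volume.restrict (Set.Ioi 0))) =
      fun z : ℕ × ℕ × ℕ => x ^ (z.1 + z.2.1 + z.2.2) *
        ((z.1 + z.2.1 + z.2.2).factorial : ℝ) /
        ((z.1.factorial : ℝ) * z.2.1.factorial * z.2.2.factorial) ^ 2 :=
    funext fun z => integral_Phi x z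
  rw [e2] at HS
  exact regroup HS
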